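/- Let z be a nonzero vector in Z^2 with positive first coordinate and let x be a lattice point with 0 < x_1 < z_1 lying strictly above the line through 0 and z. Then (x, z-x) is a minimal path of weight z (i.e., x lies on the closest rational line parallel to and above the line through 0 and z) if and only if gcd(x_1,x_2) = gcd(z_1-x_1, z_2-x_2) = 1 and the triangle with vertices (0,0), x, z contains no lattice point in its interior. -/

import Mathlib

/-- The determinant `det(a,b) = a₁b₂ - a₂b₁`. -/
def detZ (a b : ℤ × ℤ) : ℤ := a.1 * b.2 - a.2 * b.1

/-- The embedding of the lattice `ℤ²` into `ℝ²`. -/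
def toR (p : ℤ × ℤ) : ℝ × ℝ := ((p.1 : ℝ), (p.2 : ℝ))

namespace MinPathAux

noncomputable def detR (a b : ℝ × ℝ) : ℝ := a.1 * b.2 - a.2 * b.1

lemma detR_toR (p q : ℤ × ℤ) : detR (toR p) (toR q) = (detZ p q : ℝ) := by
  simp only [detR, toR, detZ]
  push_cast
  ring

lemma toR_sub (p q : ℤ × ℤ) : toR p - toR q = toR (p - q) := by
  simp [toR, Prod.ext_iff]

lemma detR_isLinear (W : ℝ × ℝ) : IsLinearMap ℝ (fun p => detR W p) := by
  constructor
  · intro a b; simp [detR]; ring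
  · intro c a; simp [detR, Prod.smul_fst, Prod.smul_snd, smul_eq_mul]; ring

lemma detR_add_smul (W p v : ℝ × ℝ) (t : ℝ) :
    detR W (p + t • v) = detR W p + t * detR W v := by
  simp [detR, Prod.smul_fst, Prod.smul_snd, smul_eq_mul]; ring

lemma detR_sub' (W p q : ℝ × ℝ) : detR W (p - q) = detR W p - detR W q := by
  simp [detR]; ring

lemma exists_step (s : Set (ℝ × ℝ)) (p v : ℝ × ℝ) (hp : p ∈ interior s) :
    ∃ t : ℝ, 0 < t ∧ p + t • v ∈ s := by
  obtain ⟨ε, hε, hball⟩ := Metric.isOpen_iff.1 isOpen_interior p hp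
  set t : ℝ := ε / (2 * (‖v‖ + 1)) with ht
  have htpos : 0 < t := by positivity
  refine ⟨t, htpos, interior_subset (hball ?_)⟩
  have hd : dist (p + t • v) p = t * ‖v‖ := by
    simp [dist_eq_norm, norm_smul, abs_of_nonneg htpos.le]
  rw [Metric.mem_ball, hd, ht]
  rw [div_mul_eq_mul_div, div_lt_iff₀ (by positivity)]
  nlinarith [norm_nonneg v]




lemma detR_self (W : ℝ × ℝ) : detR W W = 0 := by simp [detR]; ring

lemma sq_pos_of_ne {W : ℝ × ℝ} (h : W ≠ 0) : 0 < W.1 ^ 2 + W.2 ^ 2 := by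
  by_contra hc
  push_neg at hc
  have e1 : W.1 = 0 := by nlinarith [sq_nonneg W.1, sq_nonneg W.2]
  have e2 : W.2 = 0 := by nlinarith [sq_nonneg W.1, sq_nonneg W.2]
  exact h (Prod.ext e1 e2)

lemma interior_tri {X Z : ℝ × ℝ} (hD : 0 < detR Z X) (p : ℝ × ℝ) :
    p ∈ interior (convexHull ℝ {(0 : ℝ × ℝ), X, Z}) ↔
      (0 < detR Z p ∧ detR X p < 0 ∧ detR (Z - X) (p - X) < 0) := by
  set D := detR Z X with hDdef
  constructor
  · -- interior ⊆ strict inequalities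
    intro hp
    set C : Set (ℝ × ℝ) :=
      {q | 0 ≤ detR Z q} ∩ ({q | detR X q ≤ 0} ∩ {q | detR (Z - X) q ≤ detR (Z - X) X})
      with hCdef
    have hC : convexHull ℝ {(0 : ℝ × ℝ), X, Z} ⊆ C := by
      apply convexHull_min
      · refine Set.insert_subset ?_ (Set.insert_subset ?_ (Set.singleton_subset_iff.mpr ?_))
        · refine ⟨?_, ?_, ?_⟩
          · show (0:ℝ) ≤ detR Z 0; simp [detR]
          · show detR X 0 ≤ 0; simp [detR]
          · show detR (Z - X) 0 ≤ detR (Z - X) X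
            have h1 : detR (Z - X) (0 : ℝ × ℝ) = 0 := by simp [detR]
            have h2 : detR (Z - X) X = D := by simp [detR, hDdef]; ring
            rw [h1, h2]; linarith
        · refine ⟨le_of_lt hD, ?_, ?_⟩
          · show detR X X ≤ 0; rw [detR_self]
          · show detR (Z - X) X ≤ detR (Z - X) X; exact le_refl _
        · refine ⟨?_, ?_, ?_⟩
          · show (0:ℝ) ≤ detR Z Z; rw [detR_self]
          · show detR X Z ≤ 0
            have : detR X Z = -D := by simp [detR, hDdef]; ring
            rw [this]; linarith
          · show detR (Z - X) Z ≤ detR (Z - X) X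
            have h2 : detR (Z - X) X = D := by simp [detR, hDdef]; ring
            have h3 : detR (Z - X) Z = D := by simp [detR, hDdef]; ring
            rw [h2, h3]
      · exact ((convex_halfSpace_ge (detR_isLinear Z) 0).inter
          ((convex_halfSpace_le (detR_isLinear X) 0).inter
            (convex_halfSpace_le (detR_isLinear (Z - X)) _)))
    have hpC : p ∈ interior C := interior_mono hC hp
    obtain ⟨h1, h2, h3⟩ := interior_subset hpC
    have h1' : (0:ℝ) ≤ detR Z p := h1
    have h2' : detR X p ≤ 0 := h2
    have h3' : detR (Z - X) p ≤ detR (Z - X) X := h3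
    have hZne : Z ≠ 0 := by
      rintro rfl
      have : detR (0 : ℝ × ℝ) X = 0 := by simp [detR]
      rw [hDdef, this] at hD; exact lt_irrefl 0 hD
    have hXne : X ≠ 0 := by
      rintro rfl
      have : detR Z (0 : ℝ × ℝ) = 0 := by simp [detR]
      rw [hDdef, this] at hD; exact lt_irrefl 0 hD
    have hWne : Z - X ≠ 0 := by
      intro h
      have hz : Z = X := sub_eq_zero.mp h
      have : D = 0 := by rw [hDdef, hz]; exact detR_self X
      linarith
    refine ⟨?_, ?_, ?_⟩
    · rcases eq_or_lt_of_le h1' with h | h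
      · exfalso
        obtain ⟨t, ht, htmem⟩ := exists_step _ p (Z.2, -Z.1) hpC
        have hle : (0:ℝ) ≤ detR Z (p + t • (Z.2, -Z.1)) := htmem.1
        rw [detR_add_smul] at hle
        have hv : detR Z (Z.2, -Z.1) = -(Z.1 ^ 2 + Z.2 ^ 2) := by simp [detR]; ring
        rw [hv, ← h] at hle
        nlinarith [sq_pos_of_ne hZne]
      · exact h
    · rcases eq_or_lt_of_le h2' with h | h
      · exfalso
        obtain ⟨t, ht, htmem⟩ := exists_step _ p (-X.2, X.1) hpC
        have hle : detR X (p + t • (-X.2, X.1)) ≤ 0 := htmem.2.1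
        rw [detR_add_smul] at hle
        have hv : detR X (-X.2, X.1) = X.1 ^ 2 + X.2 ^ 2 := by simp [detR]; ring
        rw [hv, h] at hle
        nlinarith [sq_pos_of_ne hXne]
      · exact h
    · rw [detR_sub']
      rcases eq_or_lt_of_le h3' with h | h
      · exfalso
        obtain ⟨t, ht, htmem⟩ := exists_step _ p (-(Z - X).2, (Z - X).1) hpC
        have hle : detR (Z - X) (p + t • (-(Z - X).2, (Z - X).1)) ≤ detR (Z - X) X := htmem.2.2
        rw [detR_add_smul] at hle
        have hv : detR (Z - X) (-(Z - X).2, (Z - X).1) = (Z - X).1 ^ 2 + (Z - X).2 ^ 2 := by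
          simp [detR]; ring
        rw [hv, ← h] at hle
        nlinarith [sq_pos_of_ne hWne]
      · linarith
  · -- strict inequalities ⊆ interior
    intro hstrict
    set S : Set (ℝ × ℝ) := {q | 0 < detR Z q ∧ detR X q < 0 ∧ detR (Z - X) (q - X) < 0} with hS
    have hSopen : IsOpen S := by
      have c1 : Continuous fun q : ℝ × ℝ => detR Z q := by
        simp only [detR]; fun_prop
      have c2 : Continuous fun q : ℝ × ℝ => detR X q := by
        simp only [detR]; fun_prop
      have c3 : Continuous fun q : ℝ × ℝ => detR (Z - X) (q - X) := by
        simp only [detR]; fun_prop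
      exact (isOpen_lt continuous_const c1).inter
        ((isOpen_lt c2 continuous_const).inter (isOpen_lt c3 continuous_const))
    have hSsub : S ⊆ convexHull ℝ {(0 : ℝ × ℝ), X, Z} := by
      intro q hq
      obtain ⟨hq1, hq2, hq3⟩ := hq
      set a : ℝ := detR Z q / D with ha
      set b : ℝ := -detR X q / D with hb
      have hDne : D ≠ 0 := ne_of_gt hD
      have hapos : 0 < a := div_pos hq1 hD
      have hbpos : 0 < b := div_pos (by linarith) hD
      have hid : detR (Z - X) (q - X) = detR Z q - detR X q - D := by
        simp only [detR, hDdef, Prod.fst_sub, Prod.snd_sub]; ring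
      have hab1 : a + b < 1 := by
        rw [ha, hb, ← add_div, div_lt_one hD]
        linarith [hid ▸ hq3]
      have hqeq : q = a • X + b • Z := by
        have h1 : q.1 = a * X.1 + b * Z.1 := by
          rw [ha, hb]; field_simp; simp only [detR, hDdef]; ring
        have h2 : q.2 = a * X.2 + b * Z.2 := by
          rw [ha, hb]; field_simp; simp only [detR, hDdef]; ring
        ext
        · simpa using h1
        · simpa using h2
      have hXmem : X ∈ convexHull ℝ {(0 : ℝ × ℝ), X, Z} :=
        subset_convexHull ℝ _ (by simp)
      have hZmem : Z ∈ convexHull ℝ {(0 : ℝ × ℝ), X, Z} :=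
        subset_convexHull ℝ _ (by simp)
      have h0mem : (0 : ℝ × ℝ) ∈ convexHull ℝ {(0 : ℝ × ℝ), X, Z} :=
        subset_convexHull ℝ _ (by simp)
      have habpos : 0 < a + b := by linarith
      have hmid : (a / (a + b)) • X + (b / (a + b)) • Z ∈ convexHull ℝ {(0 : ℝ × ℝ), X, Z} :=
        (convex_convexHull ℝ _) hXmem hZmem (by positivity) (by positivity)
          (by rw [← add_div, div_self (ne_of_gt habpos)])
      have hc1 : (0:ℝ) ≤ a + b := le_of_lt habpos
      have hc2 : (0:ℝ) ≤ 1 - (a + b) := by linarith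
      have hc3 : (a + b) + (1 - (a + b)) = 1 := by ring
      have hfin := (convex_convexHull ℝ ({(0 : ℝ × ℝ), X, Z})) hmid h0mem hc1 hc2 hc3
      have heq : (a + b) • ((a / (a + b)) • X + (b / (a + b)) • Z) + (1 - (a + b)) • (0 : ℝ × ℝ)
          = a • X + b • Z := by
        rw [smul_add, smul_smul, smul_smul, smul_zero, add_zero,
          mul_div_cancel₀ _ (ne_of_gt habpos), mul_div_cancel₀ _ (ne_of_gt habpos)]
      rw [hqeq]
      rw [heq] at hfin
      exact hfin
    exact interior_maximal hSsub hSopen hstrict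



lemma exists_k {A D g : ℤ} (hgA : g ∣ A) (hgD : g ∣ D) (h0 : 0 < g) (hlt : g < D)
    (hgcd : Int.gcd A D = g.natAbs) (hco : Int.gcd (A - 1) D = 1) :
    ∃ k s : ℤ, 0 < k ∧ k < D - g ∧ s * D = k * A + g := by
  obtain ⟨a', ha'⟩ := hgA
  obtain ⟨n, hn⟩ := hgD
  have hn2 : 2 ≤ n := by
    by_contra hc
    push_neg at hc
    have hn1 : n ≤ 1 := by omega
    nlinarith
  have hnpos : (0:ℤ) < n := by linarith
  -- gcd a' n = 1
  have hgcd' : Int.gcd a' n = 1 := by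
    have h1 : Int.gcd (g * a') (g * n) = g.natAbs * Int.gcd a' n := Int.gcd_mul_left g a' n
    rw [← ha', ← hn, hgcd] at h1
    have hgn : g.natAbs ≠ 0 := by
      simp [Int.natAbs_eq_zero]; omega
    have h2 : g.natAbs * 1 = g.natAbs * Int.gcd a' n := by rw [mul_one, ← h1]
    exact (mul_left_cancel₀ hgn h2).symm
  obtain ⟨α, β, hαβ⟩ := Int.isCoprime_iff_gcd_eq_one.mpr hgcd'
  set k : ℤ := (-α) % n with hk
  have hk0 : 0 ≤ k := Int.emod_nonneg _ (ne_of_gt hnpos)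
  have hkn : k < n := Int.emod_lt_of_pos _ hnpos
  have hdvd : n ∣ k * a' + 1 := by
    have h1 : k = -α - n * ((-α) / n) := by
      rw [hk, Int.emod_def]
    refine ⟨β - ((-α) / n) * a', ?_⟩
    rw [h1]; linear_combination -hαβ
  have hkne : k ≠ 0 := by
    intro h
    rw [h] at hdvd
    simp at hdvd
    have := Int.le_of_dvd (by norm_num) hdvd
    omega
  have hkpos : 0 < k := lt_of_le_of_ne hk0 (Ne.symm hkne)
  -- k < D - g
  have hkbound : k < D - g := by
    rcases eq_or_lt_of_le (show (0:ℤ) + 1 ≤ g by omega) with hg1 | hg2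
    · -- g = 1
      have hg1' : g = 1 := hg1.symm
      subst hg1'
      simp only [one_mul] at ha' hn
      have hkn1 : k ≠ n - 1 := by
        intro h
        have : n ∣ a' - 1 := by
          obtain ⟨m, hm⟩ := hdvd
          refine ⟨a' - m, ?_⟩
          rw [h] at hm
          linear_combination -hm
        have hd2 : (D:ℤ) ∣ (A - 1) := by rw [hn, ha']; simpa using this
        have : (D:ℤ) ∣ (Int.gcd (A-1) D : ℤ) := Int.dvd_coe_gcd hd2 dvd_rfl
        rw [hco] at this
        have := Int.le_of_dvd (by norm_num) this
        omega
      omega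
    · -- 2 ≤ g
      have : k ≤ n - 1 := by omega
      have : D - g = g * (n - 1) := by rw [hn]; ring
      nlinarith
  obtain ⟨m, hm⟩ := hdvd
  exact ⟨k, m, hkpos, hkbound, by rw [hn, ha']; linear_combination (-g) * hm⟩

end MinPathAux

open MinPathAux

/-- Characterization of minimal paths: for `z` with `z₁ > 0` and a lattice point `x`
with `0 < x₁ < z₁` strictly above the line `L` through `0` and `z` (i.e. `detZ z x > 0`),
the point `x` lies on the closest rational line parallel to `L` above `L`
(i.e. `detZ z x = gcd(z₁,z₂)`, the minimal positive value of `z₁x₂ - z₂x₁`)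
if and only if `gcd(x₁,x₂) = gcd(z₁-x₁,z₂-x₂) = 1` and the triangle with vertices
`(0,0)`, `x`, `z` has no lattice point in its interior. -/
theorem minimal_path_iff (z x : ℤ × ℤ) (hz : 0 < z.1)
    (hx1 : 0 < x.1) (hx2 : x.1 < z.1) (habove : 0 < detZ z x) :
    detZ z x = Int.gcd z.1 z.2 ↔
      (Int.gcd x.1 x.2 = 1 ∧ Int.gcd (z.1 - x.1) (z.2 - x.2) = 1 ∧
        ¬ ∃ p : ℤ × ℤ, toR p ∈ interior (convexHull ℝ {(0 : ℝ × ℝ), toR x, toR z})) := by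
  set g : ℤ := (Int.gcd z.1 z.2 : ℤ) with hg
  set D : ℤ := detZ z x with hDdef
  have hgz1 : g ∣ z.1 := Int.gcd_dvd_left _ _
  have hgz2 : g ∣ z.2 := Int.gcd_dvd_right _ _
  have hgD : g ∣ D := by
    rw [hDdef]; exact dvd_sub (hgz1.mul_right x.2) (hgz2.mul_right x.1)
  have hgpos : 0 < g := by
    rw [hg]
    have : 0 < Int.gcd z.1 z.2 := Int.gcd_pos_iff.mpr (Or.inl (ne_of_gt hz))
    exact_mod_cast this
  have hDreal : (0:ℝ) < detR (toR z) (toR x) := by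
    rw [detR_toR]; exact_mod_cast habove
  constructor
  · intro hDg
    have hDg' : D = g := hDg
    refine ⟨?_, ?_, ?_⟩
    · -- gcd x = 1
      set d : ℤ := (Int.gcd x.1 x.2 : ℤ) with hd
      obtain ⟨a, ha⟩ : d ∣ x.1 := Int.gcd_dvd_left _ _
      obtain ⟨b, hb⟩ : d ∣ x.2 := Int.gcd_dvd_right _ _
      have hdpos : 0 < d := by
        rw [hd]
        have : 0 < Int.gcd x.1 x.2 := Int.gcd_pos_iff.mpr (Or.inl (ne_of_gt hx1))
        exact_mod_cast this
      set t : ℤ := z.1 * b - z.2 * a with htd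
      have hDt : D = d * t := by
        rw [hDdef, htd]; simp only [detZ]; linear_combination z.1 * hb - z.2 * ha
      have hgt : g ∣ t := by
        rw [htd]; exact dvd_sub (hgz1.mul_right b) (hgz2.mul_right a)
      have htpos : 0 < t := by nlinarith
      have hgle : g ≤ t := Int.le_of_dvd htpos hgt
      have hd1 : d ≤ 1 := by nlinarith
      have : d = 1 := le_antisymm hd1 hdpos
      rw [hd] at this; exact_mod_cast this
    · -- gcd (z - x) = 1
      set d : ℤ := (Int.gcd (z.1 - x.1) (z.2 - x.2) : ℤ) with hd
      obtain ⟨a, ha⟩ : d ∣ z.1 - x.1 := Int.gcd_dvd_left _ _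
      obtain ⟨b, hb⟩ : d ∣ z.2 - x.2 := Int.gcd_dvd_right _ _
      have hdpos : 0 < d := by
        rw [hd]
        have : 0 < Int.gcd (z.1 - x.1) (z.2 - x.2) :=
          Int.gcd_pos_iff.mpr (Or.inl (by omega))
        exact_mod_cast this
      set t : ℤ := z.2 * a - z.1 * b with htd
      have hDt : D = d * t := by
        rw [hDdef, htd]; simp only [detZ]; linear_combination z.2 * ha - z.1 * hb
      have hgt : g ∣ t := by
        rw [htd]; exact dvd_sub (hgz2.mul_right a) (hgz1.mul_right b)
      have htpos : 0 < t := by nlinarith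
      have hgle : g ≤ t := Int.le_of_dvd htpos hgt
      have hd1 : d ≤ 1 := by nlinarith
      have : d = 1 := le_antisymm hd1 hdpos
      rw [hd] at this; exact_mod_cast this
    · -- no interior point
      rintro ⟨p, hp⟩
      rw [interior_tri hDreal] at hp
      obtain ⟨hp1, hp2, hp3⟩ := hp
      rw [detR_toR] at hp1 hp2
      rw [toR_sub, toR_sub, detR_toR] at hp3
      have h1 : 0 < detZ z p := by exact_mod_cast hp1
      have h2 : detZ x p < 0 := by exact_mod_cast hp2
      have h3 : detZ (z - x) (p - x) < 0 := by exact_mod_cast hp3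
      have hid : detZ z p = detZ (z - x) (p - x) + detZ x p + D := by
        rw [hDdef]; simp only [detZ, Prod.fst_sub, Prod.snd_sub]; ring
      have hlt : detZ z p < g := by rw [← hDg']; omega
      have hdvd : g ∣ detZ z p := by
        simp only [detZ]; exact dvd_sub (hgz1.mul_right p.2) (hgz2.mul_right p.1)
      have := Int.le_of_dvd h1 hdvd
      omega
  · rintro ⟨hgx, hgzx, hnoint⟩
    have hgleD : g ≤ D := Int.le_of_dvd habove hgD
    rcases eq_or_lt_of_le hgleD with h | h
    · exact h.symm
    · exfalso
      apply hnoint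
      obtain ⟨c, d, hcd⟩ := Int.isCoprime_iff_gcd_eq_one.mpr hgx
      set A : ℤ := z.1 * c + z.2 * d with hA
      -- z in basis (x, u) where u = (-d, c)
      have hz1 : z.1 = A * x.1 - D * (-d) := by
        rw [hA, hDdef]; simp only [detZ]; linear_combination (-z.1) * hcd
      have hz2 : z.2 = A * x.2 - D * c := by
        rw [hA, hDdef]; simp only [detZ]; linear_combination (-z.2) * hcd
      have hAgcd : Int.gcd A D = Int.gcd z.1 z.2 := by
        apply Nat.dvd_antisymm
        · rw [← Int.natCast_dvd_natCast]
          apply Int.dvd_coe_gcd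
          · rw [hz1]
            exact dvd_sub ((Int.gcd_dvd_left _ _).mul_right _) ((Int.gcd_dvd_right _ _).mul_right _)
          · rw [hz2]
            exact dvd_sub ((Int.gcd_dvd_left _ _).mul_right _) ((Int.gcd_dvd_right _ _).mul_right _)
        · rw [← Int.natCast_dvd_natCast]
          apply Int.dvd_coe_gcd
          · rw [hA]
            exact dvd_add ((Int.gcd_dvd_left _ _).mul_right _) ((Int.gcd_dvd_right _ _).mul_right _)
          · exact hgD
      have hA1gcd : Int.gcd (A - 1) D = 1 := by
        rw [← hgzx]
        apply Nat.dvd_antisymm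
        · rw [← Int.natCast_dvd_natCast]
          apply Int.dvd_coe_gcd
          · have e1 : z.1 - x.1 = (A - 1) * x.1 - D * (-d) := by rw [hz1]; ring
            rw [e1]
            exact dvd_sub ((Int.gcd_dvd_left _ _).mul_right _) ((Int.gcd_dvd_right _ _).mul_right _)
          · have e2 : z.2 - x.2 = (A - 1) * x.2 - D * c := by rw [hz2]; ring
            rw [e2]
            exact dvd_sub ((Int.gcd_dvd_left _ _).mul_right _) ((Int.gcd_dvd_right _ _).mul_right _)
        · rw [← Int.natCast_dvd_natCast]
          apply Int.dvd_coe_gcd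
          · have e3 : A - 1 = (z.1 - x.1) * c + (z.2 - x.2) * d := by
              rw [hA]; linear_combination hcd
            rw [e3]
            exact dvd_add ((Int.gcd_dvd_left _ _).mul_right _) ((Int.gcd_dvd_right _ _).mul_right _)
          · have e4 : D = (z.1 - x.1) * x.2 - (z.2 - x.2) * x.1 := by
              rw [hDdef]; simp only [detZ]; ring
            rw [e4]
            exact dvd_sub ((Int.gcd_dvd_left _ _).mul_right _) ((Int.gcd_dvd_right _ _).mul_right _)
      have hgA : g ∣ A := by
        rw [hA]; exact dvd_add (hgz1.mul_right c) (hgz2.mul_right d)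
      have hgcdnat : Int.gcd A D = g.natAbs := by
        rw [hAgcd, hg, Int.natAbs_natCast]
      obtain ⟨k, s, hkpos, hkb, hs⟩ := exists_k hgA hgD hgpos h hgcdnat hA1gcd
      obtain ⟨p, hp1', hp2'⟩ : ∃ p : ℤ × ℤ, p.1 = s * x.1 - k * (-d) ∧ p.2 = s * x.2 - k * c :=
        ⟨(s * x.1 - k * (-d), s * x.2 - k * c), rfl, rfl⟩
      have hsD : s * (z.1 * x.2 - z.2 * x.1) = k * (z.1 * c + z.2 * d) + g := by
        rw [hDdef] at hs; rw [hA] at hs; simpa only [detZ] using hs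
      have hdet1 : detZ z p = g := by
        simp only [detZ, hp1', hp2']
        linear_combination hsD
      have hdet2 : detZ x p = -k := by
        simp only [detZ, hp1', hp2']
        linear_combination (-k) * hcd
      have hdet3 : detZ (z - x) (p - x) = g + k - D := by
        have hid : detZ (z - x) (p - x) = detZ z p - detZ x p - D := by
          rw [hDdef]; simp only [detZ, Prod.fst_sub, Prod.snd_sub]; ring
        rw [hid, hdet1, hdet2]; ring
      refine ⟨p, ?_⟩
      rw [interior_tri hDreal]
      refine ⟨?_, ?_, ?_⟩
      · rw [detR_toR, hdet1]; exact_mod_cast hgpos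
      · rw [detR_toR, hdet2]
        have : (0:ℤ) < k := hkpos
        exact_mod_cast neg_neg_iff_pos.mpr hkpos
      · rw [toR_sub, toR_sub, detR_toR, hdet3]
        have : g + k - D < 0 := by omega
        exact_mod_cast this
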